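/- arXiv:2508.08218 — 4 statements merged into one kernel-verified Lean document; each statement's English description precedes it below -/
import Mathlib

section
/- Let γ, μ, λ, β be real numbers with μ > 0, 0 < γμ < 1, 0 ≤ β ≤ λ, λ < γμ/(2(1-γμ)), and β > γλμ. Then α₁ = (1 + β - γμ(1+λ))² + (β - γλμ)(2 + β - γμ(1+λ)) satisfies 0 < α₁ < 1. -/
theorem stmt_1 (γ μ lam β : ℝ) (hμ : 0 < μ) (hγμ0 : 0 < γ * μ) (hγμ1 : γ * μ < 1)
    (hβ0 : 0 ≤ β) (hbl : β ≤ lam) (hlub : lam < γ * μ / (2 * (1 - γ * μ)))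
    (hβl : γ * lam * μ < β) :
    0 < (1 + β - γ * μ * (1 + lam)) ^ 2 +
        (β - γ * lam * μ) * (2 + β - γ * μ * (1 + lam)) ∧
      (1 + β - γ * μ * (1 + lam)) ^ 2 +
        (β - γ * lam * μ) * (2 + β - γ * μ * (1 + lam)) < 1 := by
  have he : (0:ℝ) < 1 - γ * μ := by linarith
  have hd : (0:ℝ) < β - γ * lam * μ := by linarith
  have hlub' : lam * (2 * (1 - γ * μ)) < γ * μ :=
    (lt_div_iff₀ (by positivity)).mp hlub
  have ha : (0:ℝ) < 1 + β - γ * μ * (1 + lam) := by nlinarith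
  constructor
  · nlinarith [sq_nonneg (1 + β - γ * μ * (1 + lam)), mul_pos hd (by linarith : (0:ℝ) < 2 + β - γ * μ * (1 + lam))]
  · nlinarith [sq_nonneg (β - γ * lam * μ), sq_nonneg (1 - γ * μ),
      mul_pos hd ha, mul_pos hd he, mul_pos he hγμ0,
      mul_lt_mul_of_pos_right hlub' hγμ0]
end

section
/- Let γ, μ, λ, β be real numbers with μ > 0, 0 < γμ < 1, 0 ≤ λ ≤ β, and β < (1/2)γμ(1 + 2λ). Then α₁ = (1 + β - γμ(1+λ))² + (β - γλμ)(2 + β - γμ(1+λ)) satisfies 0 < α₁ < 1. -/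
theorem stmt_3 (γ μ lam β : ℝ) (hμ : 0 < μ) (hγμ0 : 0 < γ * μ) (hγμ1 : γ * μ < 1)
    (hl0 : 0 ≤ lam) (hlb : lam ≤ β) (hβub : β < (1 / 2) * γ * μ * (1 + 2 * lam)) :
    0 < (1 + β - γ * μ * (1 + lam)) ^ 2 +
        (β - γ * lam * μ) * (2 + β - γ * μ * (1 + lam)) ∧
      (1 + β - γ * μ * (1 + lam)) ^ 2 +
        (β - γ * lam * μ) * (2 + β - γ * μ * (1 + lam)) < 1 := by
  have ha : 0 < 1 + β - γ * μ * (1 + lam) := by nlinarith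
  have hb : 0 ≤ β - γ * lam * μ := by nlinarith
  constructor
  · nlinarith [sq_nonneg (1 + β - γ * μ * (1 + lam))]
  · nlinarith [mul_pos ha (show (0:ℝ) < γ * μ * (1 + 2 * lam) - 2 * β by nlinarith)]
end

section
/- Let f : ℝⁿ → ℝ be twice continuously differentiable with Hessian H, and suppose H is μ-diagonally dominant on a convex set 𝒳 (H_ii ≥ μ + Σ_{j≠i}|H_ij| pointwise) with μ > 0, and suppose γ, λ, β > 0 satisfy for all relevant points w: 1 − γ(1+λ)H_ii(w) + β ≥ 0 and γλH_ii(w) − β ≤ 0. Define u_i(x,y) = x_i − γ∇_i f(x + λ(x−y)) + β(x_i − y_i). Then for all (x,y), (x',y') with all evaluation points in 𝒳: |u_i(x,y) − u_i(x',y')| ≤ (1 + β − γμ(1+λ))‖x − x'‖∞ + (β − γλμ)‖y − y'‖∞. -/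
theorem stmt_15 {n : ℕ} (f : (Fin n → ℝ) → ℝ) (hf : ContDiff ℝ 2 f)
    (X : Set (Fin n → ℝ)) (hX : Convex ℝ X)
    (μ γ lam β : ℝ) (hμ : 0 < μ) (hγ : 0 < γ) (hl : 0 < lam) (hβ : 0 < β)
    (H : (Fin n → ℝ) → Fin n → Fin n → ℝ)
    (hH : ∀ x k j, H x k j =
      fderiv ℝ (fun y => fderiv ℝ f y (Pi.single k 1)) x (Pi.single j 1))
    (hdom : ∀ x ∈ X, ∀ i, μ + ∑ j ∈ Finset.univ.erase i, |H x i j| ≤ H x i i)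
    (hsign : ∀ w ∈ X, ∀ i,
      0 ≤ 1 - γ * (1 + lam) * H w i i + β ∧ γ * lam * H w i i - β ≤ 0)
    (u : (Fin n → ℝ) → (Fin n → ℝ) → Fin n → ℝ)
    (hu : ∀ x y i, u x y i =
      x i - γ * fderiv ℝ f (x + lam • (x - y)) (Pi.single i 1) + β * (x i - y i)) :
    ∀ x y x' y' : Fin n → ℝ,
      x + lam • (x - y) ∈ X → x' + lam • (x' - y') ∈ X →
      ∀ i, |u x y i - u x' y' i| ≤
        (1 + β - γ * μ * (1 + lam)) * ‖x - x'‖ + (β - γ * lam * μ) * ‖y - y'‖ := by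
  intro x y x' y' hz hz' i
  set g : (Fin n → ℝ) → ℝ := fun w => fderiv ℝ f w (Pi.single i 1) with hgdef
  have hgC : ContDiff ℝ 1 g := (hf.fderiv_right (le_refl 2)).clm_apply contDiff_const
  have hgd : Differentiable ℝ g := hgC.differentiable one_ne_zero
  set a : Fin n → ℝ := x - x' with ha
  set b : Fin n → ℝ := y - y' with hb
  set z : Fin n → ℝ := x + lam • (x - y) with hzdef
  set z' : Fin n → ℝ := x' + lam • (x' - y') with hzdef'
  set d : Fin n → ℝ := z - z' with hd
  have hdj : ∀ j, d j = (1 + lam) * a j - lam * b j := by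
    intro j
    simp only [hd, hzdef, hzdef', ha, hb, Pi.add_apply, Pi.sub_apply, Pi.smul_apply,
      smul_eq_mul]
    ring
  -- fderiv of g along v, expressed with H
  have hfd : ∀ w v, fderiv ℝ g w v = ∑ j, v j * H w i j := by
    intro w v
    have hv : v = ∑ j, v j • (Pi.single j 1 : Fin n → ℝ) := by
      ext k; simp [Pi.single_apply]
    conv_lhs => rw [hv]
    rw [map_sum]
    refine Finset.sum_congr rfl fun j _ => ?_
    rw [map_smul, hH w i j]
    simp [hgdef]
  -- the auxiliary function along the segment
  set w : ℝ → (Fin n → ℝ) := fun t => z' + t • d with hw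
  set ψ : ℝ → ℝ := fun t =>
    (x' i + t * a i) - γ * g (w t) + β * ((x' i + t * a i) - (y' i + t * b i)) with hψ
  set ψ' : ℝ → ℝ := fun t =>
    a i - γ * (∑ j, d j * H (w t) i j) + β * (a i - b i) with hψ'
  have hderiv : ∀ t : ℝ, HasDerivAt ψ (ψ' t) t := by
    intro t
    have h1 : HasDerivAt (fun s : ℝ => z' + s • d) d t := by
      simpa using ((hasDerivAt_id t).smul_const d).const_add z'
    have h2 : HasDerivAt (fun s : ℝ => g (w s)) (fderiv ℝ g (w t) d) t :=
      (hgd (w t)).hasFDerivAt.comp_hasDerivAt t h1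
    have h3 : HasDerivAt (fun s : ℝ => x' i + s * a i) (a i) t := by
      simpa using ((hasDerivAt_id t).mul_const (a i)).const_add (x' i)
    have h4 : HasDerivAt (fun s : ℝ => y' i + s * b i) (b i) t := by
      simpa using ((hasDerivAt_id t).mul_const (b i)).const_add (y' i)
    have h5 := (h3.sub (h2.const_mul γ)).add ((h3.sub h4).const_mul β)
    have : ψ' t = a i - γ * fderiv ℝ g (w t) d + β * (a i - b i) := by
      rw [hfd (w t) d]
    rw [this]
    exact h5
  -- membership of segment points in X
  have hmem : ∀ t ∈ Set.Icc (0:ℝ) 1, w t ∈ X := by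
    intro t ht
    have : (1 - t) • z' + t • z ∈ X := hX hz' hz (by linarith [ht.2]) ht.1 (by ring)
    have he : w t = (1 - t) • z' + t • z := by
      simp only [hw, hd]
      module
    rw [he]; exact this
  -- the derivative bound
  set K : ℝ := (1 + β - γ * μ * (1 + lam)) * ‖a‖ + (β - γ * lam * μ) * ‖b‖ with hK
  have hbound : ∀ t ∈ Set.Ico (0:ℝ) 1, ‖ψ' t‖ ≤ K := by
    intro t ht
    have hwX : w t ∈ X := hmem t ⟨ht.1, le_of_lt ht.2⟩
    set h' : Fin n → ℝ := fun j => H (w t) i j with hh'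
    have hs1 := (hsign (w t) hwX i).1
    have hs2 := (hsign (w t) hwX i).2
    have hdd := hdom (w t) hwX i
    set T : ℝ := ∑ j ∈ Finset.univ.erase i, |h' j| with hT
    have hTnn : 0 ≤ T := Finset.sum_nonneg fun j _ => abs_nonneg _
    -- split the sum
    have hsplit : (∑ j, d j * h' j)
        = d i * h' i + ∑ j ∈ Finset.univ.erase i, d j * h' j :=
      (Finset.add_sum_erase _ _ (Finset.mem_univ i)).symm
    have hanorm : ∀ j, |a j| ≤ ‖a‖ := fun j => by
      simpa [Real.norm_eq_abs] using norm_le_pi_norm a j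
    have hbnorm : ∀ j, |b j| ≤ ‖b‖ := fun j => by
      simpa [Real.norm_eq_abs] using norm_le_pi_norm b j
    have hann : (0:ℝ) ≤ ‖a‖ := norm_nonneg _
    have hbnn : (0:ℝ) ≤ ‖b‖ := norm_nonneg _
    -- bound the off-diagonal sum
    have hS : |∑ j ∈ Finset.univ.erase i, d j * h' j|
        ≤ ((1 + lam) * ‖a‖ + lam * ‖b‖) * T := by
      calc |∑ j ∈ Finset.univ.erase i, d j * h' j|
          ≤ ∑ j ∈ Finset.univ.erase i, |d j * h' j| := Finset.abs_sum_le_sum_abs _ _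
        _ ≤ ∑ j ∈ Finset.univ.erase i, ((1 + lam) * ‖a‖ + lam * ‖b‖) * |h' j| := by
            refine Finset.sum_le_sum fun j _ => ?_
            rw [abs_mul]
            refine mul_le_mul_of_nonneg_right ?_ (abs_nonneg _)
            rw [hdj j]
            calc |(1 + lam) * a j - lam * b j|
                ≤ |(1 + lam) * a j| + |lam * b j| := abs_sub _ _
              _ = (1 + lam) * |a j| + lam * |b j| := by
                  rw [abs_mul, abs_mul, abs_of_pos (by linarith), abs_of_pos hl]
              _ ≤ (1 + lam) * ‖a‖ + lam * ‖b‖ := by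
                  have := hanorm j; have := hbnorm j
                  nlinarith
        _ = ((1 + lam) * ‖a‖ + lam * ‖b‖) * T := by rw [hT, ← Finset.mul_sum]
    -- main estimate
    have hrw : ψ' t = (1 + β - γ * (1 + lam) * h' i) * a i
        + (γ * lam * h' i - β) * b i
        - γ * (∑ j ∈ Finset.univ.erase i, d j * h' j) := by
      simp only [hψ', hsplit, hh']
      rw [← Finset.add_sum_erase _ _ (Finset.mem_univ i), hdj i]; ring
    rw [Real.norm_eq_abs, hrw]
    have step1 : |(1 + β - γ * (1 + lam) * h' i) * a i
        + (γ * lam * h' i - β) * b i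
        - γ * (∑ j ∈ Finset.univ.erase i, d j * h' j)|
        ≤ (1 + β - γ * (1 + lam) * h' i) * ‖a‖ + (β - γ * lam * h' i) * ‖b‖
          + γ * (((1 + lam) * ‖a‖ + lam * ‖b‖) * T) := by
      have t1 : |(1 + β - γ * (1 + lam) * h' i) * a i|
          ≤ (1 + β - γ * (1 + lam) * h' i) * ‖a‖ := by
        rw [abs_mul, abs_of_nonneg (by linarith : (0:ℝ) ≤ 1 + β - γ * (1 + lam) * h' i)]
        exact mul_le_mul_of_nonneg_left (hanorm i) (by linarith)
      have t2 : |(γ * lam * h' i - β) * b i| ≤ (β - γ * lam * h' i) * ‖b‖ := by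
        rw [abs_mul, abs_of_nonpos (by linarith : γ * lam * h' i - β ≤ 0)]
        have : (0:ℝ) ≤ β - γ * lam * h' i := by linarith
        calc -(γ * lam * h' i - β) * |b i| = (β - γ * lam * h' i) * |b i| := by ring
          _ ≤ (β - γ * lam * h' i) * ‖b‖ := mul_le_mul_of_nonneg_left (hbnorm i) this
      have t3 : |γ * (∑ j ∈ Finset.univ.erase i, d j * h' j)|
          ≤ γ * (((1 + lam) * ‖a‖ + lam * ‖b‖) * T) := by
        rw [abs_mul, abs_of_pos hγ]
        exact mul_le_mul_of_nonneg_left hS (le_of_lt hγ)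
      calc |(1 + β - γ * (1 + lam) * h' i) * a i + (γ * lam * h' i - β) * b i
            - γ * (∑ j ∈ Finset.univ.erase i, d j * h' j)|
          ≤ |(1 + β - γ * (1 + lam) * h' i) * a i + (γ * lam * h' i - β) * b i|
            + |γ * (∑ j ∈ Finset.univ.erase i, d j * h' j)| := abs_sub _ _
        _ ≤ |(1 + β - γ * (1 + lam) * h' i) * a i| + |(γ * lam * h' i - β) * b i|
            + |γ * (∑ j ∈ Finset.univ.erase i, d j * h' j)| := by
            have := abs_add_le ((1 + β - γ * (1 + lam) * h' i) * a i)
              ((γ * lam * h' i - β) * b i)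
            linarith
        _ ≤ _ := by linarith
    refine le_trans step1 ?_
    -- use diagonal dominance: T ≤ h' i - μ
    have hTle : T ≤ h' i - μ := by
      have : μ + T ≤ h' i := hdd
      linarith
    rw [hK]
    nlinarith [mul_le_mul_of_nonneg_left hTle (mul_nonneg (mul_nonneg hγ.le (by linarith : (0:ℝ) ≤ 1 + lam)) hann),
      mul_le_mul_of_nonneg_left hTle (mul_nonneg (mul_nonneg hγ.le hl.le) hbnn)]
  -- apply the mean value inequality
  have hmvt : ‖ψ 1 - ψ 0‖ ≤ K :=
    norm_image_sub_le_of_norm_deriv_le_segment_01'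
      (fun t _ => (hderiv t).hasDerivWithinAt) hbound
  have hψ1 : ψ 1 = u x y i := by
    have hw1 : w 1 = z := by simp [hw, hd]
    rw [hu x y i, hψ]
    simp only [one_mul, hw1]
    rw [ha, hb]
    simp only [Pi.sub_apply, hgdef, ← hzdef]
    ring
  have hψ0 : ψ 0 = u x' y' i := by
    have hw0 : w 0 = z' := by simp [hw]
    rw [hu x' y' i, hψ]
    simp only [zero_mul, hw0]
    simp only [hgdef, ← hzdef']
    ring
  rw [Real.norm_eq_abs, hψ1, hψ0] at hmvt
  rw [hK, ha, hb] at hmvt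
  exact hmvt
end

section
/- Let h : ℝⁿ → ℝⁿ be a map with fixed point z* that is an α-contraction in the ∞-norm with α ∈ (0,1), and suppose h is 'block-diagonal compatible': h(z)_i depends only on z. Consider an asynchronous iteration where at each step k an arbitrary nonempty subset S(k) ⊆ {1,…,n} of coordinates is updated via z_i(k+1) = h(ẑⁱ(k))_i for i ∈ S(k), using possibly outdated information ẑⁱ(k) whose components all lie in a set 𝒵(m) = {v : ‖v − z*‖∞ ≤ αᵐ‖z(0) − z*‖∞}. Then the updated coordinate satisfies |z_i(k+1) − z*_i| ≤ α^{m+1}‖z(0) − z*‖∞, i.e., it lies in the i-th coordinate projection of 𝒵(m+1); moreover coordinates not updated remain in their current set. Hence each set 𝒵(m) is forward invariant under asynchronous updates once all local states enter it. -/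
open Classical in

theorem stmt_16 {n : ℕ} (h : (Fin n → ℝ) → (Fin n → ℝ))
    (zstar z0 : Fin n → ℝ) (α : ℝ) (hα : α ∈ Set.Ioo (0 : ℝ) 1)
    (hfix : h zstar = zstar)
    (hcontr : ∀ z, ‖h z - zstar‖ ≤ α * ‖z - zstar‖)
    (m : ℕ) (S : Set (Fin n)) (hS : S.Nonempty)
    (zhat : Fin n → (Fin n → ℝ))
    (hzhat : ∀ i, ‖zhat i - zstar‖ ≤ α ^ m * ‖z0 - zstar‖)
    (z : Fin n → ℝ) (hz : ‖z - zstar‖ ≤ α ^ m * ‖z0 - zstar‖)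
    (z' : Fin n → ℝ)
    (hz' : ∀ i, z' i = if i ∈ S then h (zhat i) i else z i) :
    (∀ i ∈ S, |z' i - zstar i| ≤ α ^ (m + 1) * ‖z0 - zstar‖) ∧
      (∀ i ∉ S, |z' i - zstar i| ≤ α ^ m * ‖z0 - zstar‖) ∧
      ‖z' - zstar‖ ≤ α ^ m * ‖z0 - zstar‖ := by
  obtain ⟨hα0, hα1⟩ := hα
  have key1 : ∀ i ∈ S, |z' i - zstar i| ≤ α ^ (m + 1) * ‖z0 - zstar‖ := by
    intro i hi
    have h1 : |z' i - zstar i| = |(h (zhat i) - zstar) i| := by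
      rw [hz' i, if_pos hi]; rfl
    have h2 : |(h (zhat i) - zstar) i| ≤ ‖h (zhat i) - zstar‖ := by
      have := norm_le_pi_norm (h (zhat i) - zstar) i
      simpa [Real.norm_eq_abs] using this
    calc |z' i - zstar i| ≤ ‖h (zhat i) - zstar‖ := by rw [h1]; exact h2
      _ ≤ α * ‖zhat i - zstar‖ := hcontr _
      _ ≤ α * (α ^ m * ‖z0 - zstar‖) := by
          exact mul_le_mul_of_nonneg_left (hzhat i) hα0.le
      _ = α ^ (m + 1) * ‖z0 - zstar‖ := by ring
  have key2 : ∀ i ∉ S, |z' i - zstar i| ≤ α ^ m * ‖z0 - zstar‖ := by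
    intro i hi
    have h1 : |z' i - zstar i| = |(z - zstar) i| := by
      rw [hz' i, if_neg hi]; rfl
    calc |z' i - zstar i| ≤ ‖z - zstar‖ := by
          rw [h1]
          simpa [Real.norm_eq_abs] using norm_le_pi_norm (z - zstar) i
      _ ≤ α ^ m * ‖z0 - zstar‖ := hz
  refine ⟨key1, key2, ?_⟩
  have hbound : ∀ i, |(z' - zstar) i| ≤ α ^ m * ‖z0 - zstar‖ := by
    intro i
    by_cases hi : i ∈ S
    · have := key1 i hi
      have hstep : α ^ (m + 1) * ‖z0 - zstar‖ ≤ α ^ m * ‖z0 - zstar‖ := by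
        apply mul_le_mul_of_nonneg_right _ (norm_nonneg _)
        calc α ^ (m + 1) = α ^ m * α := by ring
          _ ≤ α ^ m * 1 := by
              exact mul_le_mul_of_nonneg_left hα1.le (pow_nonneg hα0.le m)
          _ = α ^ m := by ring
      exact le_trans this hstep
    · exact key2 i hi
  have : ‖z' - zstar‖ ≤ α ^ m * ‖z0 - zstar‖ := by
    apply pi_norm_le_iff_of_nonneg (by positivity) |>.mpr
    intro i
    simpa [Real.norm_eq_abs] using hbound i
  exact this
end
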